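/- Let N be standard normal, x₀ < 0, λ > 0. Then lim_{σ→0} P(N > (|x₀|/σ)√(2λ/(1 - σ²e^{-2λt})) | N > (|x₀|/σ)√(2λ)) = exp(-x₀²λ e^{-2λt}) for every t ∈ ℝ, and the right-hand side, as a function of t, is the distribution function of (Z + log(x₀²λ))/(2λ) where Z is standard Gumbel. -/

import Mathlib

open MeasureTheory ProbabilityTheory Filter

noncomputable def gtail (x : ℝ) : ℝ := ∫ y in Set.Ioi x, Real.exp (-y ^ 2 / 2)

lemma phi_integrableOn (x : ℝ) :
    IntegrableOn (fun y : ℝ => Real.exp (-y ^ 2 / 2)) (Set.Ioi x) := by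
  have h : (fun y : ℝ => Real.exp (-y ^ 2 / 2))
      = fun y : ℝ => Real.exp (-(1/2 : ℝ) * y ^ 2) := by funext y; ring_nf
  rw [h]
  exact (integrable_exp_neg_mul_sq (by norm_num)).integrableOn

lemma mul_phi_integrableOn (x : ℝ) :
    IntegrableOn (fun y : ℝ => y * Real.exp (-y ^ 2 / 2)) (Set.Ioi x) := by
  have h : (fun y : ℝ => y * Real.exp (-y ^ 2 / 2))
      = fun y : ℝ => y * Real.exp (-(1/2 : ℝ) * y ^ 2) := by funext y; ring_nf
  rw [h]
  exact (integrable_mul_exp_neg_mul_sq (by norm_num)).integrableOn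

lemma phi_tendsto_zero : Tendsto (fun y : ℝ => Real.exp (-y ^ 2 / 2)) atTop (nhds 0) := by
  refine Real.tendsto_exp_atBot.comp ?_
  have h : Tendsto (fun y : ℝ => y ^ 2 / 2) atTop atTop :=
    (tendsto_pow_atTop (by norm_num)).atTop_div_const (by norm_num)
  have h2 : (fun y : ℝ => -y ^ 2 / 2) = (Neg.neg ∘ fun y : ℝ => y ^ 2 / 2) := by
    funext y; simp [Function.comp]; ring
  rw [h2]
  exact tendsto_neg_atTop_atBot.comp h

lemma integral_mul_phi (x : ℝ) :
    ∫ y in Set.Ioi x, y * Real.exp (-y ^ 2 / 2) = Real.exp (-x ^ 2 / 2) := by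
  have hderiv : ∀ y ∈ Set.Ici x, HasDerivAt (fun y : ℝ => -Real.exp (-y ^ 2 / 2))
      (y * Real.exp (-y ^ 2 / 2)) y := by
    intro y _
    have h1 : HasDerivAt (fun y : ℝ => -y ^ 2 / 2) (-(2 * y ^ 1) / 2) y :=
      ((hasDerivAt_pow 2 y).neg).div_const 2
    have h2 : HasDerivAt (fun y : ℝ => -Real.exp (-y ^ 2 / 2)) _ y := h1.exp.neg
    convert h2 using 1
    ring
  have hlim : Tendsto (fun y : ℝ => -Real.exp (-y ^ 2 / 2)) atTop (nhds 0) := by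
    rw [show (0:ℝ) = -0 by ring]
    exact phi_tendsto_zero.neg
  have := integral_Ioi_of_hasDerivAt_of_tendsto' hderiv (mul_phi_integrableOn x) hlim
  rw [this]; ring

lemma gtail_upper {x : ℝ} (hx : 0 < x) : gtail x ≤ Real.exp (-x ^ 2 / 2) / x := by
  have h1 : gtail x ≤ ∫ y in Set.Ioi x, (y / x) * Real.exp (-y ^ 2 / 2) := by
    refine setIntegral_mono_on (phi_integrableOn x) ?_ measurableSet_Ioi ?_
    · have h := (mul_phi_integrableOn x).mul_const x⁻¹
      have he : (fun y : ℝ => y * Real.exp (-y ^ 2 / 2) * x⁻¹)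
          = fun y : ℝ => (y / x) * Real.exp (-y ^ 2 / 2) := by funext y; ring
      rwa [he] at h
    · intro y hy
      have hy' : x ≤ y := le_of_lt hy
      have h2 : (1 : ℝ) ≤ y / x := (one_le_div hx).mpr hy'
      nlinarith [Real.exp_pos (-y ^ 2 / 2)]
  calc gtail x ≤ ∫ y in Set.Ioi x, (y / x) * Real.exp (-y ^ 2 / 2) := h1
    _ = (∫ y in Set.Ioi x, y * Real.exp (-y ^ 2 / 2)) / x := by
        rw [← integral_div]
        congr 1; funext y; ring
    _ = Real.exp (-x ^ 2 / 2) / x := by rw [integral_mul_phi]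

lemma gtail_lower (x : ℝ) :
    Real.exp (-x ^ 2 / 2) * x / (x ^ 2 + 1) ≤ gtail x := by
  set f' : ℝ → ℝ := fun y => Real.exp (-y ^ 2 / 2) * ((1 - 2*y^2 - y^4) / (y^2+1)^2) with hf'
  have hderiv : ∀ y ∈ Set.Ici x, HasDerivAt
      (fun y : ℝ => Real.exp (-y ^ 2 / 2) * (y / (y^2+1))) (f' y) y := by
    intro y _
    have hden : (y:ℝ)^2 + 1 ≠ 0 := by positivity
    have h1 : HasDerivAt (fun y : ℝ => -y ^ 2 / 2) (-(2 * y ^ 1) / 2) y :=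
      ((hasDerivAt_pow 2 y).neg).div_const 2
    have h2 := h1.exp
    have h3 : HasDerivAt (fun y : ℝ => y / (y^2+1)) _ y := (hasDerivAt_id y).div ((hasDerivAt_pow 2 y).add_const 1) hden
    have h3' : HasDerivAt (fun y : ℝ => y / (y^2+1)) ((1-y^2)/(y^2+1)^2) y := by
      convert h3 using 1
      push_cast
      simp only [id_eq]
      ring
    have h4 : HasDerivAt (fun y : ℝ => Real.exp (-y ^ 2 / 2) * (y / (y^2+1))) _ y := h2.mul h3'
    have h5 : y/(y^2+1) = (y*(y^2+1))/(y^2+1)^2 := by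
      rw [div_eq_div_iff hden (pow_ne_zero 2 hden)]; ring
    convert h4 using 1
    rw [hf', h5]
    simp only [← mul_div_assoc]
    rw [← add_div]
    congr 1
    ring
  have hcont : Continuous f' := by
    apply Continuous.mul
    · exact Real.continuous_exp.comp (by continuity)
    · exact Continuous.div (by continuity) (by continuity) (fun y => by positivity)
  have habs : ∀ y : ℝ, |f' y| ≤ Real.exp (-y ^ 2 / 2) := by
    intro y
    rw [hf', abs_mul, abs_of_pos (Real.exp_pos _)]
    have h5 : |(1 - 2*y^2 - y^4) / (y^2+1)^2| ≤ 1 := by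
      rw [abs_div, abs_of_pos (by positivity : (0:ℝ) < (y^2+1)^2), div_le_one (by positivity)]
      rw [abs_le]; constructor <;> nlinarith [sq_nonneg y, sq_nonneg (y^2)]
    nlinarith [Real.exp_pos (-y ^ 2 / 2), abs_nonneg ((1 - 2*y^2 - y^4) / (y^2+1)^2)]
  have hint : IntegrableOn f' (Set.Ioi x) := by
    refine Integrable.mono' (phi_integrableOn x) hcont.aestronglyMeasurable.restrict ?_
    exact ae_of_all _ fun y => by simpa [Real.norm_eq_abs] using habs y
  have hlim : Tendsto (fun y : ℝ => Real.exp (-y ^ 2 / 2) * (y / (y^2+1))) atTop (nhds 0) := by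
    rw [show (0:ℝ) = 0 * 0 by ring]
    refine Tendsto.mul phi_tendsto_zero ?_
    refine tendsto_of_tendsto_of_tendsto_of_le_of_le' tendsto_const_nhds
      tendsto_inv_atTop_zero ?_ ?_
    · filter_upwards [eventually_gt_atTop (0:ℝ)] with y hy
      positivity
    · filter_upwards [eventually_ge_atTop (1:ℝ)] with y hy
      rw [div_le_iff₀ (by positivity)]
      have : (0:ℝ) < y := lt_of_lt_of_le one_pos hy
      rw [inv_mul_eq_div, le_div_iff₀ this]
      nlinarith
  have hftc := integral_Ioi_of_hasDerivAt_of_tendsto' hderiv hint hlim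
  have hle : ∫ y in Set.Ioi x, -f' y ≤ gtail x := by
    refine setIntegral_mono_on hint.neg (phi_integrableOn x) measurableSet_Ioi ?_
    intro y _
    exact (neg_le_abs _).trans (habs y)
  rw [integral_neg, hftc] at hle
  have : Real.exp (-x ^ 2 / 2) * (x / (x^2+1)) ≤ gtail x := by linarith
  linarith [this, (mul_div_assoc (Real.exp (-x ^ 2 / 2)) x (x^2+1)).symm ▸ this]

lemma gtail_pos {x : ℝ} (hx : 0 < x) : 0 < gtail x :=
  lt_of_lt_of_le (by positivity) (gtail_lower x)

/-- Key ratio limit lemma. -/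
lemma gtail_ratio_tendsto {a b : ℝ → ℝ} {l : Filter ℝ} [l.NeBot] {d : ℝ}
    (hb : Tendsto b l atTop)
    (hab : ∀ᶠ σ in l, 0 < b σ ∧ b σ ≤ a σ)
    (hr : Tendsto (fun σ => b σ / a σ) l (nhds 1))
    (hd : Tendsto (fun σ => a σ ^ 2 - b σ ^ 2) l (nhds d)) :
    Tendsto (fun σ => gtail (a σ) / gtail (b σ)) l (nhds (Real.exp (-d / 2))) := by
  have ha : Tendsto a l atTop :=
    tendsto_atTop_mono' l (hab.mono fun σ h => h.2) hb
  have hE : Tendsto (fun σ => Real.exp (-(a σ ^ 2 - b σ ^ 2) / 2)) l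
      (nhds (Real.exp (-d / 2))) := by
    refine Real.continuous_exp.continuousAt.tendsto.comp ?_
    exact (hd.neg).div_const 2
  have hA2 : Tendsto (fun σ => a σ ^ 2) l atTop :=
    (tendsto_pow_atTop (two_ne_zero)).comp ha
  have hB2 : Tendsto (fun σ => b σ ^ 2) l atTop :=
    (tendsto_pow_atTop (two_ne_zero)).comp hb
  -- lower bound function
  have hLo : Tendsto (fun σ => Real.exp (-(a σ ^ 2 - b σ ^ 2) / 2) * (b σ / a σ)
      * (a σ ^ 2 / (a σ ^ 2 + 1))) l (nhds (Real.exp (-d / 2))) := by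
    have h1 : Tendsto (fun σ => a σ ^ 2 / (a σ ^ 2 + 1)) l (nhds 1) := by
      have h2 : Tendsto (fun σ => (a σ ^ 2 + 1)⁻¹) l (nhds 0) :=
        tendsto_inv_atTop_zero.comp (tendsto_atTop_add_const_right l 1 hA2)
      have h3 : Tendsto (fun σ => 1 - (a σ ^ 2 + 1)⁻¹) l (nhds (1 - 0)) :=
        tendsto_const_nhds.sub h2
      refine Tendsto.congr' ?_ (by simpa using h3)
      filter_upwards [hA2.eventually_ge_atTop 1] with σ hσ
      have hne : a σ ^ 2 + 1 ≠ 0 := by nlinarith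
      field_simp
      ring
    have := (hE.mul hr).mul h1
    simpa using this
  have hHi : Tendsto (fun σ => Real.exp (-(a σ ^ 2 - b σ ^ 2) / 2) * (b σ / a σ)
      * ((b σ ^ 2 + 1) / b σ ^ 2)) l (nhds (Real.exp (-d / 2))) := by
    have h1 : Tendsto (fun σ => (b σ ^ 2 + 1) / b σ ^ 2) l (nhds 1) := by
      have h2 : Tendsto (fun σ => (b σ ^ 2)⁻¹) l (nhds 0) := tendsto_inv_atTop_zero.comp hB2
      have h3 : Tendsto (fun σ => 1 + (b σ ^ 2)⁻¹) l (nhds (1 + 0)) :=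
        tendsto_const_nhds.add h2
      refine Tendsto.congr' ?_ (by simpa using h3)
      filter_upwards [hB2.eventually_ge_atTop 1] with σ hσ
      have hne : b σ ^ 2 ≠ 0 := by nlinarith
      field_simp
      rw [add_div, div_self hne]
    have := (hE.mul hr).mul h1
    simpa using this
  refine tendsto_of_tendsto_of_tendsto_of_le_of_le' hLo hHi ?_ ?_
  · filter_upwards [hab] with σ hσ
    obtain ⟨hb0, hba⟩ := hσ
    have ha0 : 0 < a σ := lt_of_lt_of_le hb0 hba
    have hEb := Real.exp_pos (-(b σ) ^ 2 / 2)
    have hEa := Real.exp_pos (-(a σ) ^ 2 / 2)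
    have hgb := gtail_pos hb0
    have step : Real.exp (-(a σ)^2/2) * a σ / ((a σ)^2+1) / (Real.exp (-(b σ)^2/2) / b σ)
        ≤ gtail (a σ) / gtail (b σ) :=
      div_le_div₀ (le_of_lt (gtail_pos ha0)) (gtail_lower (a σ)) hgb (gtail_upper hb0)
    refine le_trans (le_of_eq ?_) step
    rw [show -(a σ ^ 2 - b σ ^ 2) / 2 = -(a σ)^2/2 - (-(b σ)^2/2) by ring, Real.exp_sub]
    have h1 : (a σ)^2 + 1 ≠ 0 := by positivity
    have h2 : a σ ≠ 0 := ne_of_gt ha0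
    have h3 : Real.exp (-(b σ)^2/2) ≠ 0 := ne_of_gt hEb
    field_simp
  · filter_upwards [hab] with σ hσ
    obtain ⟨hb0, hba⟩ := hσ
    have ha0 : 0 < a σ := lt_of_lt_of_le hb0 hba
    have hEb := Real.exp_pos (-(b σ) ^ 2 / 2)
    have hEa := Real.exp_pos (-(a σ) ^ 2 / 2)
    have hLb : 0 < Real.exp (-(b σ)^2/2) * b σ / ((b σ)^2+1) := by positivity
    have step : gtail (a σ) / gtail (b σ)
        ≤ (Real.exp (-(a σ)^2/2) / a σ) / (Real.exp (-(b σ)^2/2) * b σ / ((b σ)^2+1)) :=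
      div_le_div₀ (by positivity) (gtail_upper ha0) hLb (gtail_lower (b σ))
    refine step.trans (le_of_eq ?_)
    rw [show -(a σ ^ 2 - b σ ^ 2) / 2 = -(a σ)^2/2 - (-(b σ)^2/2) by ring, Real.exp_sub]
    have h1 : (b σ)^2 + 1 ≠ 0 := by positivity
    have h2 : a σ ≠ 0 := ne_of_gt ha0
    have h3 : b σ ≠ 0 := ne_of_gt hb0
    have h4 : Real.exp (-(b σ)^2/2) ≠ 0 := ne_of_gt hEb
    field_simp

lemma gauss_Ioi_toReal (x : ℝ) :
    (gaussianReal 0 1 (Set.Ioi x)).toReal = (Real.sqrt (2 * Real.pi))⁻¹ * gtail x := by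
  rw [gaussianReal_apply_eq_integral 0 one_ne_zero,
    ENNReal.toReal_ofReal (setIntegral_nonneg measurableSet_Ioi
      fun y _ => gaussianPDFReal_nonneg _ _ _)]
  rw [gtail, ← integral_const_mul]
  congr 1
  funext y
  simp [gaussianPDFReal]

theorem gaussian_conditional_limit_is_gumbel
    (lam x₀ : ℝ) (hlam : 0 < lam) (hx₀ : x₀ < 0)
    {Ω : Type*} [MeasurableSpace Ω] (μ : Measure Ω) [IsProbabilityMeasure μ]
    (Z : Ω → ℝ)
    (hZ : ∀ x : ℝ, μ {ω | Z ω ≤ x} = ENNReal.ofReal (Real.exp (-Real.exp (-x)))) :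
    (∀ t : ℝ,
      Tendsto
        (fun σ : ℝ =>
          (gaussianReal 0 1
              (Set.Ioi ((|x₀| / σ) * Real.sqrt (2 * lam / (1 - σ ^ 2 * Real.exp (-2 * lam * t))))
                ∩ Set.Ioi ((|x₀| / σ) * Real.sqrt (2 * lam)))).toReal
            / (gaussianReal 0 1 (Set.Ioi ((|x₀| / σ) * Real.sqrt (2 * lam)))).toReal)
        (nhdsWithin 0 (Set.Ioi 0))
        (nhds (Real.exp (-(x₀ ^ 2) * lam * Real.exp (-2 * lam * t))))) ∧
      (∀ t : ℝ,
        μ {ω | (Z ω + Real.log (x₀ ^ 2 * lam)) / (2 * lam) ≤ t}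
          = ENNReal.ofReal (Real.exp (-(x₀ ^ 2) * lam * Real.exp (-2 * lam * t)))) := by
  have hx0 : x₀ ≠ 0 := ne_of_lt hx₀
  have hx2 : (0:ℝ) < x₀ ^ 2 := by positivity
  constructor
  · intro t
    set s : ℝ := Real.exp (-2 * lam * t) with hs
    have hs0 : 0 < s := Real.exp_pos _
    have habs : 0 < |x₀| := abs_pos.mpr hx0
    have h2l : (0:ℝ) < 2 * lam := by linarith
    set a : ℝ → ℝ := fun σ => (|x₀| / σ) * Real.sqrt (2 * lam / (1 - σ ^ 2 * s)) with haa
    set b : ℝ → ℝ := fun σ => (|x₀| / σ) * Real.sqrt (2 * lam) with hbb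
    set δ : ℝ := min 1 (1 / (s + 1)) with hδ
    have hδ0 : 0 < δ := lt_min one_pos (by positivity)
    have hmem : Set.Ioo (0:ℝ) δ ∈ nhdsWithin (0:ℝ) (Set.Ioi 0) :=
      Ioo_mem_nhdsGT_of_mem ⟨le_refl 0, hδ0⟩
    -- basic facts for σ in the window
    have hu : ∀ σ ∈ Set.Ioo (0:ℝ) δ, 0 < 1 - σ ^ 2 * s := by
      intro σ ⟨h1, h2⟩
      have hσ1 : σ < 1 := lt_of_lt_of_le h2 (min_le_left _ _)
      have hσ2 : σ < 1 / (s + 1) := lt_of_lt_of_le h2 (min_le_right _ _)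
      have h3 : σ * (s + 1) < 1 := by
        rw [lt_div_iff₀ (by linarith)] at hσ2; linarith
      nlinarith [mul_lt_mul_of_pos_left h3 h1, sq_nonneg σ]
    have hb0 : ∀ σ ∈ Set.Ioo (0:ℝ) δ, 0 < b σ := by
      intro σ ⟨h1, _⟩
      exact mul_pos (div_pos habs h1) (Real.sqrt_pos.mpr h2l)
    have hba : ∀ σ ∈ Set.Ioo (0:ℝ) δ, b σ ≤ a σ := by
      intro σ hσ
      have h1 := hσ.1
      have hu' := hu σ hσ
      refine mul_le_mul_of_nonneg_left (Real.sqrt_le_sqrt ?_) (le_of_lt (div_pos habs h1))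
      calc (2*lam) = 2*lam/1 := by ring
        _ ≤ 2*lam/(1 - σ^2*s) := by
            apply div_le_div_of_nonneg_left (le_of_lt h2l) hu'
            nlinarith [mul_pos (mul_pos hσ.1 hσ.1) hs0, sq_nonneg σ, mul_nonneg (sq_nonneg σ) hs0.le]
    -- tendsto hypotheses
    have hbtop : Tendsto b (nhdsWithin 0 (Set.Ioi 0)) atTop := by
      have h1 : Tendsto (fun σ : ℝ => (|x₀| * Real.sqrt (2*lam)) * σ⁻¹)
          (nhdsWithin 0 (Set.Ioi 0)) atTop :=
        (tendsto_inv_nhdsGT_zero).const_mul_atTop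
          (mul_pos habs (Real.sqrt_pos.mpr h2l))
      refine h1.congr fun σ => by rw [hbb]; ring
    have hab : ∀ᶠ σ in nhdsWithin 0 (Set.Ioi 0), 0 < b σ ∧ b σ ≤ a σ := by
      filter_upwards [hmem] with σ hσ
      exact ⟨hb0 σ hσ, hba σ hσ⟩
    have hr : Tendsto (fun σ => b σ / a σ) (nhdsWithin 0 (Set.Ioi 0)) (nhds 1) := by
      have h1 : Tendsto (fun σ : ℝ => Real.sqrt (1 - σ^2*s))
          (nhdsWithin 0 (Set.Ioi 0)) (nhds 1) := by
        have hcont : Continuous (fun σ : ℝ => 1 - σ^2*s) :=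
          continuous_const.sub ((continuous_pow 2).mul continuous_const)
        have h2 : Tendsto (fun σ : ℝ => Real.sqrt (1 - σ^2*s)) (nhds 0)
            (nhds (Real.sqrt (1 - 0^2*s))) :=
          (Real.continuous_sqrt.comp hcont).tendsto 0
        norm_num [Real.sqrt_one] at h2
        exact h2.mono_left nhdsWithin_le_nhds
      refine Tendsto.congr' ?_ h1
      filter_upwards [hmem] with σ hσ
      have hu' := hu σ hσ
      have hnz : |x₀| / σ ≠ 0 := ne_of_gt (div_pos habs hσ.1)
      have e1 : (2:ℝ) * lam ≠ 0 := ne_of_gt h2l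
      have e2 : 1 - σ^2*s ≠ 0 := ne_of_gt hu'
      rw [haa, hbb, mul_div_mul_left _ _ hnz, ← Real.sqrt_div (le_of_lt h2l),
        show 2*lam/(2*lam/(1-σ^2*s)) = 1-σ^2*s from by field_simp]
    have hd : Tendsto (fun σ => a σ ^ 2 - b σ ^ 2) (nhdsWithin 0 (Set.Ioi 0))
        (nhds (x₀^2 * (2*lam) * s)) := by
      have h1 : Tendsto (fun σ : ℝ => x₀^2 * (2*lam) * s / (1 - σ^2*s))
          (nhdsWithin 0 (Set.Ioi 0)) (nhds (x₀^2 * (2*lam) * s)) := by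
        have hcont : Continuous (fun σ : ℝ => 1 - σ^2*s) :=
          continuous_const.sub ((continuous_pow 2).mul continuous_const)
        have h2 : Tendsto (fun σ : ℝ => x₀^2 * (2*lam) * s / (1 - σ^2*s)) (nhds 0)
            (nhds (x₀^2 * (2*lam) * s / (1 - 0^2*s))) :=
          Tendsto.div tendsto_const_nhds (hcont.tendsto 0) (by norm_num)
        norm_num at h2
        exact h2.mono_left nhdsWithin_le_nhds
      refine Tendsto.congr' ?_ h1
      filter_upwards [hmem] with σ hσ
      have hu' := hu σ hσ
      have hσ0 : σ ≠ 0 := ne_of_gt hσ.1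
      rw [haa, hbb, mul_pow, mul_pow, Real.sq_sqrt (le_of_lt h2l),
        Real.sq_sqrt (le_of_lt (div_pos h2l hu')), div_pow, sq_abs]
      field_simp
      rw [div_sub_one (by linarith : (0:ℝ) < 1 - s * σ ^ 2).ne']
      ring
    have hratio := gtail_ratio_tendsto hbtop hab hr hd
    have hexp : Real.exp (-(x₀^2 * (2*lam) * s) / 2) = Real.exp (-(x₀ ^ 2) * lam * s) := by
      congr 1; ring
    rw [hexp] at hratio
    refine Tendsto.congr' ?_ hratio
    filter_upwards [hmem] with σ hσ
    have hu' := hu σ hσ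
    rw [Set.Ioi_inter_Ioi, max_eq_left (hba σ hσ)]
    rw [gauss_Ioi_toReal, gauss_Ioi_toReal]
    rw [mul_div_mul_left]
    exact inv_ne_zero (ne_of_gt (Real.sqrt_pos.mpr (by positivity)))
  · intro t
    have hcpos : (0:ℝ) < x₀ ^ 2 * lam := mul_pos hx2 hlam
    have hset : {ω | (Z ω + Real.log (x₀ ^ 2 * lam)) / (2 * lam) ≤ t}
        = {ω | Z ω ≤ 2 * lam * t - Real.log (x₀ ^ 2 * lam)} := by
      ext ω
      simp only [Set.mem_setOf_eq]
      rw [div_le_iff₀ (by linarith)]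
      constructor <;> intro h <;> linarith
    rw [hset, hZ]
    congr 1
    rw [show -(2 * lam * t - Real.log (x₀ ^ 2 * lam))
        = Real.log (x₀ ^ 2 * lam) + -(2 * lam * t) by ring,
      Real.exp_add, Real.exp_log hcpos]
    rw [show (-2) * lam * t = -(2 * lam * t) by ring]
    ring
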